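/- Let A be a finite-dimensional commutative algebra over a field k, let M be a finitely generated A-module, and let φ : A → k be a k-linear map whose kernel contains no nonzero ideal of A. Then the map M → Hom_k(Hom_A(M,A), k) sending m to the functional f ↦ φ(f(m)) is surjective. -/
import Mathlib


/-- Let `A` be a finite-dimensional commutative `k`-algebra, `M` a finitely generated `A`-module,
and `φ : A → k` a `k`-linear map whose kernel contains no nonzero ideal of `A`. Then the map
`M → Hom_k(Hom_A(M,A), k)`, `m ↦ (f ↦ φ (f m))`, is surjective: every `k`-linear functional
`g` on `Hom_A(M,A)` is of the form `f ↦ φ (f m)` for some `m : M`. -/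
theorem stmt3 (k A : Type*) [Field k] [CommRing A] [Algebra k A] [FiniteDimensional k A]
    (M : Type*) [AddCommGroup M] [Module A M] [Module.Finite A M]
    (φ : A →ₗ[k] k) (hφ : ∀ I : Ideal A, (∀ x ∈ I, φ x = 0) → I = ⊥) :
    ∀ g : (M →ₗ[A] A) →ₗ[k] k, ∃ m : M, ∀ f : M →ₗ[A] A, g f = φ (f m) := by
  intro g
  letI : Module k M := Module.compHom M (algebraMap k A)
  haveI : IsScalarTower k A M := ⟨fun x a m => by
    show (x • a) • m = (algebraMap k A x) • a • m
    rw [Algebra.smul_def, mul_smul]⟩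
  haveI : Module.Finite k M := Module.Finite.trans A M
  -- the k-linear map N = Hom_A(M,A) → Dual k M, f ↦ φ ∘ f
  let Ψ : (M →ₗ[A] A) →ₗ[k] Module.Dual k M :=
    { toFun := fun f => φ ∘ₗ (f.restrictScalars k)
      map_add' := fun f₁ f₂ => by ext m; simp
      map_smul' := fun c f => by ext m; simp }
  have hΨ : ∀ (f : M →ₗ[A] A) (m : M), Ψ f m = φ (f m) := fun f m => rfl
  have hinj : Function.Injective Ψ := by
    rw [injective_iff_map_eq_zero]
    intro f hf
    have hr : LinearMap.range f = ⊥ := by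
      refine hφ _ ?_
      rintro x ⟨m, rfl⟩
      have := congrArg (fun (ξ : Module.Dual k M) => ξ m) hf
      simpa [hΨ] using this
    exact LinearMap.range_eq_bot.mp hr
  have hsurj : Function.Surjective Ψ.dualMap :=
    LinearMap.dualMap_surjective_of_injective hinj
  obtain ⟨h, hh⟩ := hsurj g
  obtain ⟨m, rfl⟩ := (Module.evalEquiv k M).surjective h
  refine ⟨m, fun f => ?_⟩
  have := congrArg (fun (ξ : Module.Dual k (M →ₗ[A] A)) => ξ f) hh
  simpa [LinearMap.dualMap_apply, Module.evalEquiv_apply, hΨ] using this.symm
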